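/- For every integer n ≥ 1 there exist β > 0, a constant a > 0, a dimension d, a loss function f(w; z) on ℝ^d which as a function of w is β-smooth for every data point z but is not convex, and twin datasets S, S' of size n, such that for every horizon T and every 1 ≤ t_0 ≤ T, coupled uniform-sampling SGD with step sizes α_t = a/(0.99·β·t) initialized at w_0 = w_0' = 0 satisfies E_A[‖Δ_T‖ | Δ_{t_0} ≠ 0] ≥ (1/(2n))·(T/t_0)^a. -/

import Mathlib

open Finset
open scoped RealInnerProductSpace

noncomputable section

/-- SGD iterates: `sgd f α z w0 t` is the parameter after `t` steps, where `z s` is the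
data point used at step `s` and `α s` the step size of step `s` (steps are numbered from 1). -/
def sgd {d : ℕ} {Z : Type*} (f : EuclideanSpace ℝ (Fin d) → Z → ℝ) (α : ℕ → ℝ) (z : ℕ → Z)
    (w0 : EuclideanSpace ℝ (Fin d)) : ℕ → EuclideanSpace ℝ (Fin d)
  | 0 => w0
  | t + 1 => sgd f α z w0 t - α (t + 1) • gradient (fun w => f w (z (t + 1))) (sgd f α z w0 t)

/-- Divergence `Δ_t = w_t - w_t'` of coupled SGD on the datasets `S, S'` with the common
index sequence `idx` and common initialization `w0`. -/
def sgdDelta {d n : ℕ} {Z : Type*} (f : EuclideanSpace ℝ (Fin d) → Z → ℝ) (α : ℕ → ℝ)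
    (S S' : Fin n → Z) (idx : ℕ → Fin n) (w0 : EuclideanSpace ℝ (Fin d)) (t : ℕ) :
    EuclideanSpace ℝ (Fin d) :=
  sgd f α (fun s => S (idx s)) w0 t - sgd f α (fun s => S' (idx s)) w0 t

/-- Extend a finite index tuple (steps `1,…,T`) to an index sequence `ℕ → Fin n`. -/
def extSeq {n : ℕ} (hn : 0 < n) {T : ℕ} (ω : Fin T → Fin n) : ℕ → Fin n :=
  fun t => if h : 0 < t ∧ t ≤ T then ω ⟨t - 1, by omega⟩ else ⟨0, hn⟩

/-- Expectation over uniform-sampling SGD randomness: the indices `i_1,…,i_T` are i.i.d.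
uniform on `{1,…,n}` and `g` depends on the index sequence. -/
def expA {n : ℕ} (hn : 0 < n) (T : ℕ) (g : (ℕ → Fin n) → ℝ) : ℝ :=
  (∑ ω : Fin T → Fin n, g (extSeq hn ω)) / (n : ℝ) ^ T

open Classical in
/-- Conditional expectation over uniform-sampling SGD randomness given an event `E` of the
index sequence. -/
def expACond {n : ℕ} (hn : 0 < n) (T : ℕ) (g : (ℕ → Fin n) → ℝ)
    (E : (ℕ → Fin n) → Prop) : ℝ :=
  (∑ ω ∈ univ.filter (fun ω : Fin T → Fin n => E (extSeq hn ω)), g (extSeq hn ω)) /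
    ((univ.filter (fun ω : Fin T → Fin n => E (extSeq hn ω))).card : ℝ)

/-! ## Auxiliary construction -/

abbrev E1 := EuclideanSpace ℝ (Fin 1)

def u0 : E1 := EuclideanSpace.single 0 1

lemma norm_u0 : ‖u0‖ = 1 := by simp [u0]

lemma u0_ne : u0 ≠ 0 := by
  intro h
  have := norm_u0
  rw [h] at this; simp at this

def myf : E1 → E1 × ℝ → ℝ := fun w z => ⟪z.1, w⟫ - (1/2) * ‖w‖^2

lemma myf_grad (z : E1 × ℝ) (x : E1) : gradient (fun w => myf w z) x = z.1 - x := by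
  have h : HasFDerivAt (fun w : E1 => myf w z) (innerSL ℝ (z.1 - x)) x := by
    have h1 : HasFDerivAt (fun w : E1 => (⟪z.1, w⟫ : ℝ)) (innerSL ℝ z.1) x :=
      (innerSL ℝ z.1).hasFDerivAt
    have h2 : HasFDerivAt (fun w : E1 => (1/2 : ℝ) * ‖w‖^2)
        ((1/2 : ℝ) • (2 • (innerSL ℝ x))) x :=
      ((hasStrictFDerivAt_norm_sq x).hasFDerivAt).const_mul _
    have h3 := h1.sub h2
    have heq : innerSL ℝ z.1 - (1/2 : ℝ) • (2 • innerSL ℝ x) = innerSL ℝ (z.1 - x) := by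
      ext y
      simp [inner_sub_left] <;> ring
    rw [heq] at h3
    exact h3
  have hg : HasGradientAt (fun w : E1 => myf w z) (z.1 - x) x := by
    have := hasFDerivAt_iff_hasGradientAt.mp h
    convert this using 1
    apply (InnerProductSpace.toDual ℝ E1).injective
    rw [LinearIsometryEquiv.apply_symm_apply]
    ext y
    simp [InnerProductSpace.toDual_apply_apply]
  exact hg.gradient

def SS {n : ℕ} (i : Fin n) : Fin n → E1 × ℝ := fun j => if j = i then (u0, 0) else 0

def SS' {n : ℕ} : Fin n → E1 × ℝ := fun _ => 0

/-- Scalar divergence recursion. -/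
def cc {n : ℕ} (α : ℕ → ℝ) (i : Fin n) (idx : ℕ → Fin n) : ℕ → ℝ
  | 0 => 0
  | t + 1 => (1 + α (t+1)) * cc α i idx t - α (t+1) * (if idx (t+1) = i then 1 else 0)

lemma sgd_step (α : ℕ → ℝ) (z : ℕ → E1 × ℝ) (w0 : E1) (t : ℕ) :
    sgd myf α z w0 (t+1) = sgd myf α z w0 t - α (t+1) • ((z (t+1)).1 - sgd myf α z w0 t) := by
  rw [sgd, myf_grad]

lemma delta_eq {n : ℕ} (α : ℕ → ℝ) (i : Fin n) (idx : ℕ → Fin n) (t : ℕ) :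
    sgdDelta myf α (SS i) SS' idx 0 t = cc α i idx t • u0 := by
  induction t with
  | zero => simp [sgdDelta, sgd, cc]
  | succ t ih =>
    have hab : sgd myf α (fun s => SS i (idx s)) 0 t
        - sgd myf α (fun s => SS' (idx s)) 0 t = cc α i idx t • u0 := ih
    rw [sgdDelta, sgd_step, sgd_step]
    set a := sgd myf α (fun s => SS i (idx s)) 0 t with ha
    set b := sgd myf α (fun s => SS' (idx s)) 0 t with hb
    have h2 : (SS' (idx (t+1)) : E1 × ℝ).1 = 0 := rfl
    rw [h2, cc]
    have hae : a = b + cc α i idx t • u0 := by rw [← hab]; abel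
    by_cases hit : idx (t+1) = i
    · have h1 : (SS i (idx (t+1)) : E1 × ℝ).1 = u0 := by simp [SS, hit]
      rw [h1, if_pos hit, hae]
      module
    · have h1 : (SS i (idx (t+1)) : E1 × ℝ).1 = 0 := by simp [SS, hit]
      rw [h1, if_neg hit, hae]
      module

section Growth

variable {n : ℕ} (α : ℕ → ℝ) (i : Fin n) (idx : ℕ → Fin n)

lemma cc_nonpos (hα : ∀ t, 0 ≤ α t) : ∀ t, cc α i idx t ≤ 0 := by
  intro t
  induction t with
  | zero => simp [cc]
  | succ t ih =>
    rw [cc]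
    have h1 := hα (t+1)
    have h2 : (0:ℝ) ≤ (if idx (t+1) = i then (1:ℝ) else 0) := by positivity
    nlinarith

lemma cc_grow (hα : ∀ t : ℕ, 1 ≤ t → 1/(t:ℝ) ≤ α t) (h1 : idx 1 = i) :
    ∀ t : ℕ, 1 ≤ t → ((t:ℝ) + 1)/2 ≤ -(cc α i idx t) := by
  intro t ht
  induction t with
  | zero => omega
  | succ t ih =>
    rcases Nat.eq_or_lt_of_le ht with h | h
    · -- t + 1 = 1, i.e. t = 0
      have ht0 : t = 0 := by omega
      subst ht0
      have hα1 := hα 1 le_rfl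
      simp only [cc, Nat.zero_add, h1, if_pos rfl] at *
      norm_num at hα1 ⊢
      linarith
    · have ht1 : 1 ≤ t := by omega
      have ihh := ih ht1
      rw [cc]
      have hat : 1/((t:ℝ)+1) ≤ α (t+1) := by
        have := hα (t+1) (by omega)
        push_cast at this
        convert this using 2
      have htpos : (0:ℝ) < (t:ℝ) + 1 := by positivity
      have hapos : 0 < α (t+1) := lt_of_lt_of_le (by positivity) hat
      have hind : (0:ℝ) ≤ (if idx (t+1) = i then (1:ℝ) else 0) := by positivity
      push_cast
      have key : (1 + α (t+1)) * (((t:ℝ)+1)/2) ≤ (1 + α (t+1)) * (-(cc α i idx t)) :=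
        mul_le_mul_of_nonneg_left ihh (by linarith)
      have key2 : ((t:ℝ)+1+1)/2 ≤ (1 + α (t+1)) * (((t:ℝ)+1)/2) := by
        rw [div_le_iff₀ htpos] at hat
        nlinarith
      nlinarith

end Growth


lemma bound_aux {n m : ℕ} (hn : 0 < n) (g : (ℕ → Fin n) → ℝ) (Ev : (ℕ → Fin n) → Prop)
    (i : Fin n) (c : ℝ) (hc : 0 ≤ c)
    (hg0 : ∀ ω : Fin (m+1) → Fin n, 0 ≤ g (extSeq hn ω))
    (hsub : ∀ ω : Fin (m+1) → Fin n, ω 0 = i → Ev (extSeq hn ω))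
    (hgc : ∀ ω : Fin (m+1) → Fin n, ω 0 = i → c ≤ g (extSeq hn ω)) :
    c / n ≤ expACond hn (m+1) g Ev := by
  classical
  unfold expACond
  set F := univ.filter (fun ω : Fin (m+1) → Fin n => Ev (extSeq hn ω)) with hF
  set F' := univ.filter (fun ω : Fin (m+1) → Fin n => ω 0 = i) with hF'
  have hsub2 : F' ⊆ F := by
    intro ω hω
    simp only [hF, hF', Finset.mem_filter, Finset.mem_univ, true_and] at *
    exact hsub ω hω
  have hcard' : n ^ m ≤ F'.card := by
    have hmap : ∀ gg ∈ (univ : Finset (Fin m → Fin n)),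
        (Fin.cons i gg : Fin (m+1) → Fin n) ∈ F' := by
      intro gg _
      simp [hF']
    have hinj : Set.InjOn (fun gg : Fin m → Fin n => (Fin.cons i gg : Fin (m+1) → Fin n))
        ↑(univ : Finset (Fin m → Fin n)) :=
      Function.Injective.injOn (fun g1 g2 h => by
        funext j
        have := congrFun h j.succ
        simpa using this)
    have := Finset.card_le_card_of_injOn _ hmap hinj
    simpa [Fintype.card_fun] using this
  have hFcard_le : F.card ≤ n ^ (m+1) := by
    have := Finset.card_filter_le (univ : Finset (Fin (m+1) → Fin n))
      (fun ω => Ev (extSeq hn ω))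
    simpa [Fintype.card_fun] using this
  have hFpos : 0 < F.card := by
    have h1 : 0 < n ^ m := pow_pos hn m
    exact lt_of_lt_of_le h1 (le_trans hcard' (Finset.card_le_card hsub2))
  have hsum : (n:ℝ) ^ m * c ≤ ∑ ω ∈ F, g (extSeq hn ω) := by
    have s1 : (F'.card : ℝ) * c ≤ ∑ ω ∈ F', g (extSeq hn ω) := by
      have := Finset.card_nsmul_le_sum F' (fun ω => g (extSeq hn ω)) c
        (fun ω hω => hgc ω (by simpa [hF'] using hω))
      simpa [nsmul_eq_mul] using this
    have s2 : ∑ ω ∈ F', g (extSeq hn ω) ≤ ∑ ω ∈ F, g (extSeq hn ω) :=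
      Finset.sum_le_sum_of_subset_of_nonneg hsub2 (fun ω _ _ => hg0 ω)
    have s0 : ((n:ℝ)) ^ m * c ≤ (F'.card : ℝ) * c := by
      apply mul_le_mul_of_nonneg_right _ hc
      exact_mod_cast hcard'
    linarith
  have key : (n:ℝ) ^ m * c / (n:ℝ) ^ (m+1) ≤
      (∑ ω ∈ F, g (extSeq hn ω)) / (F.card : ℝ) := by
    apply div_le_div₀ (Finset.sum_nonneg (fun ω _ => hg0 ω)) hsum
    · exact_mod_cast hFpos
    · exact_mod_cast hFcard_le
  have heq : c / n = (n:ℝ) ^ m * c / (n:ℝ) ^ (m+1) := by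
    have hn' : (0:ℝ) < n := by exact_mod_cast hn
    field_simp
    ring
  rw [heq]
  exact key

/-- conditional divergence lower bound for a non-convex smooth loss. -/
theorem statement8 (n : ℕ) (hn : 0 < n) :
    ∃ (β a : ℝ), 0 < β ∧ 0 < a ∧
    ∃ (d : ℕ) (f : EuclideanSpace ℝ (Fin d) → EuclideanSpace ℝ (Fin d) × ℝ → ℝ)
      (S S' : Fin n → EuclideanSpace ℝ (Fin d) × ℝ) (i : Fin n),
      -- f is β-smooth in w for every data point, but not convex
      (∀ z u v, ‖gradient (fun w => f w z) u - gradient (fun w => f w z) v‖ ≤ β * ‖u - v‖) ∧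
      (∃ z, ¬ ConvexOn ℝ Set.univ (fun w => f w z)) ∧
      -- S, S' are twin datasets differing exactly at index i
      (∀ j, j ≠ i → S j = S' j) ∧ S i ≠ S' i ∧
      -- SGD with step sizes α_t = a/(0.99βt) from w₀ = 0
      (∀ T t0 : ℕ, 1 ≤ t0 → t0 ≤ T →
        expACond hn T
            (fun idx => ‖sgdDelta f (fun t => a / (0.99 * β * t)) S S' idx 0 T‖)
            (fun idx => sgdDelta f (fun t => a / (0.99 * β * t)) S S' idx 0 t0 ≠ 0) ≥
          (1 / (2 * n)) * ((T : ℝ) / t0) ^ a) := by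
  classical
  refine ⟨1, 1, one_pos, one_pos, 1, myf, SS ⟨0, hn⟩, SS', ⟨0, hn⟩, ?_, ?_, ?_, ?_, ?_⟩
  · -- smoothness
    intro z u v
    rw [myf_grad, myf_grad, sub_sub_sub_cancel_left, norm_sub_rev, one_mul]
  · -- non-convexity
    refine ⟨(0, 0), fun h => ?_⟩
    have h2 := h.2 (Set.mem_univ (0 : E1)) (Set.mem_univ ((2:ℝ) • u0))
      (by norm_num : (0:ℝ) ≤ 1/2) (by norm_num : (0:ℝ) ≤ 1/2) (by norm_num)
    have e1 : (1/2 : ℝ) • (0 : E1) + (1/2 : ℝ) • ((2:ℝ) • u0) = u0 := by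
      rw [smul_zero, zero_add, smul_smul]; norm_num
    rw [e1] at h2
    have hn2 : ‖(2:ℝ) • u0‖ = 2 := by rw [norm_smul, norm_u0]; norm_num
    simp only [myf, inner_zero_left, norm_zero, norm_u0, hn2] at h2
    norm_num at h2
  · intro j hj; simp [SS, SS', hj]
  · simp only [SS, SS', if_pos rfl]
    intro h
    exact u0_ne (congrArg Prod.fst h)
  · intro T t0 ht0 htT
    obtain ⟨m, rfl⟩ : ∃ m, T = m + 1 := ⟨T - 1, by omega⟩
    set i : Fin n := ⟨0, hn⟩ with hidef
    have hA1 : ∀ t : ℕ, 1 ≤ t → 1/(t:ℝ) ≤ (1:ℝ) / (0.99 * 1 * (t:ℕ)) := by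
      intro t ht
      have h1 : (1:ℝ) ≤ (t:ℝ) := by exact_mod_cast ht
      have h2 : (0:ℝ) < 0.99 * 1 * (t:ℝ) := by nlinarith
      have h3 : (0.99 : ℝ) * 1 * (t:ℝ) ≤ (t:ℝ) := by nlinarith
      exact one_div_le_one_div_of_le h2 h3
    have hext : ∀ ω : Fin (m+1) → Fin n, ω 0 = i →
        extSeq hn ω 1 = i := by
      intro ω hω
      rw [extSeq, dif_pos ⟨Nat.one_pos, by omega⟩]
      exact hω
    have hgrow : ∀ ω : Fin (m+1) → Fin n, ω 0 = i → ∀ t : ℕ, 1 ≤ t →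
        ((t:ℝ) + 1)/2 ≤ -(cc (fun t => (1:ℝ) / (0.99 * 1 * (t:ℕ))) i (extSeq hn ω) t) :=
      fun ω hω => cc_grow _ i (extSeq hn ω) hA1 (hext ω hω)
    refine le_trans ?_ (bound_aux hn _ _ i (((m:ℝ) + 2)/2) (by positivity) ?_ ?_ ?_)
    · -- arithmetic: RHS ≤ c / n
      rw [Real.rpow_one]
      have hn' : (0:ℝ) < n := by exact_mod_cast hn
      have ht0' : (1:ℝ) ≤ (t0:ℝ) := by exact_mod_cast ht0
      have hd : ((m:ℝ) + 1)/(t0:ℝ) ≤ (m:ℝ) + 1 := by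
        apply div_le_self (by positivity) ht0'
      have hcast : ((m+1 : ℕ) : ℝ) = (m:ℝ) + 1 := by push_cast; ring
      rw [hcast]
      calc 1 / (2 * (n:ℝ)) * (((m:ℝ) + 1) / (t0:ℝ))
          ≤ 1 / (2 * (n:ℝ)) * ((m:ℝ) + 2) := by
            apply mul_le_mul_of_nonneg_left _ (by positivity)
            linarith
        _ = ((m:ℝ) + 2)/2 / (n:ℝ) := by field_simp
    · intro ω
      exact norm_nonneg _
    · -- event holds
      intro ω hω
      rw [delta_eq]
      have h1 := hgrow ω hω t0 ht0
      have ht0' : (1:ℝ) ≤ (t0:ℝ) := by exact_mod_cast ht0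
      have hcne : cc (fun t => (1:ℝ) / (0.99 * 1 * (t:ℕ))) i (extSeq hn ω) t0 ≠ 0 := by
        intro h
        rw [h] at h1
        norm_num at h1
        linarith
      exact smul_ne_zero hcne u0_ne
    · -- norm lower bound
      intro ω hω
      rw [delta_eq, norm_smul, norm_u0, mul_one]
      have h1 := hgrow ω hω (m+1) (by omega)
      have h2 := neg_le_abs (cc (fun t => (1:ℝ) / (0.99 * 1 * (t:ℕ))) i (extSeq hn ω) (m+1))
      rw [Real.norm_eq_abs]
      push_cast at h1 ⊢
      linarith
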